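/- arXiv:2202.08565 — 2 statements merged into one kernel-verified Lean document; each statement's English description precedes it below -/
import Mathlib

section
/- Let h: ℕ → ℕ be the Hilbert function of some reduced projective variety in P^N, where N = C(n+d,d) − 1. Then there exists a reduced closed subvariety X ⊆ V_{n,d} ⊆ P^N with H_X(t) = h(t) for all t if and only if there exists a function k: ℕ → ℕ which is the Hilbert function of some reduced projective variety in P^n and such that h(t) = k(dt) for all t. -/
open MvPolynomial

noncomputable section

namespace VeroneseCI

variable (K : Type) [Field K]

/-- Evaluation of the monomial with exponent vector `m` at the point `v` of the affine cone. -/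
def monEval {n : ℕ} (v : Fin (n + 1) → K) (m : Fin (n + 1) →₀ ℕ) : K :=
  m.prod fun j k => v j ^ k

/-- The Veronese coordinates of a vector `v`, indexed by `ι` via the enumeration `e` of the
degree-`d` exponent vectors. -/
def vCoords (n d : ℕ) {ι : Type} (e : ι ≃ {m : Fin (n + 1) →₀ ℕ // m.degree = d})
    (v : Fin (n + 1) → K) : ι → K :=
  fun i => monEval K v (e i).1

/-- The Veronese embedding `ν_{n,d} : ℙⁿ → ℙᴺ` (with the coordinates of the target indexed by
`ι` via the enumeration `e` of the degree-`d` monomials). -/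
def veroneseMap (n d : ℕ) {ι : Type} [Nonempty ι]
    (e : ι ≃ {m : Fin (n + 1) →₀ ℕ // m.degree = d})
    (x : Projectivization K (Fin (n + 1) → K)) : Projectivization K (ι → K) :=
  letI := Classical.propDecidable (vCoords K n d e x.rep ≠ 0)
  if h : vCoords K n d e x.rep ≠ 0 then Projectivization.mk K (vCoords K n d e x.rep) h
  else Projectivization.mk K (fun _ => 1)
    (fun hc => one_ne_zero (congrFun hc (Classical.arbitrary ι)))

/-- The Veronese variety `V_{n,d}`, i.e. the image of the Veronese embedding. -/
def veroneseVariety (n d : ℕ) {ι : Type} [Nonempty ι]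
    (e : ι ≃ {m : Fin (n + 1) →₀ ℕ // m.degree = d}) : Set (Projectivization K (ι → K)) :=
  Set.range (veroneseMap K n d e)

/-- The graded `K`-algebra morphism `φ_d : S → R` sending `y_i` to the `i`-th degree-`d`
monomial. -/
def phi (n d : ℕ) {ι : Type} (e : ι ≃ {m : Fin (n + 1) →₀ ℕ // m.degree = d}) :
    MvPolynomial ι K →ₐ[K] MvPolynomial (Fin (n + 1)) K :=
  MvPolynomial.aeval fun i => MvPolynomial.monomial (e i).1 (1 : K)

variable {σ : Type}

/-- The homogeneous vanishing ideal of a set of points of projective space. -/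
def pvi (W : Set (Projectivization K (σ → K))) : Ideal (MvPolynomial σ K) :=
  ⨅ (v : {w : σ → K // w ≠ 0}) (_ : Projectivization.mk K v.1 v.2 ∈ W),
    RingHom.ker (MvPolynomial.eval v.1)

/-- The zero locus in projective space of an ideal of the polynomial ring. -/
def pzl (I : Ideal (MvPolynomial σ K)) : Set (Projectivization K (σ → K)) :=
  {x | ∀ f ∈ I, ∀ v : {w : σ → K // w ≠ 0}, Projectivization.mk K v.1 v.2 = x →
    MvPolynomial.eval v.1 f = 0}

/-- A set of points of projective space is a (reduced) closed subvariety if it is the zero locus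
of its homogeneous vanishing ideal. -/
def IsClosedSubvariety (W : Set (Projectivization K (σ → K))) : Prop :=
  W = pzl K (pvi K W)

/-- The Hilbert function of a subset `W` of projective space: the `K`-dimension of the degree-`t`
part of the homogeneous coordinate ring of `W`. -/
def hilb (W : Set (Projectivization K (σ → K))) (t : ℕ) : ℕ :=
  Module.finrank K ((homogeneousSubmodule σ K t) ⧸
    ((Submodule.restrictScalars K (pvi K W)).comap (homogeneousSubmodule σ K t).subtype))

/-- `W` is a complete intersection of type `(a 0, …, a (r-1))` if it is a closed subvariety whose
homogeneous vanishing ideal is generated by homogeneous forms of degrees `a 0, …, a (r-1)` and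
whose codimension is `r`. -/
def IsCIofType [Fintype σ] (W : Set (Projectivization K (σ → K))) {r : ℕ} (a : Fin r → ℕ) :
    Prop :=
  IsClosedSubvariety K W ∧
  (∃ f : Fin r → MvPolynomial σ K, (∀ i, (f i).IsHomogeneous (a i)) ∧
      pvi K W = Ideal.span (Set.range f)) ∧
  ringKrullDim (MvPolynomial σ K ⧸ pvi K W) + (r : WithBot ℕ∞) =
    (Fintype.card σ : WithBot ℕ∞)

/-- A conic: a complete intersection of type `(1,…,1,2)` of codimension `card σ - 2`
(i.e. a plane curve of degree `2`). -/
def IsConic [Fintype σ] (C : Set (Projectivization K (σ → K))) : Prop :=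
  IsCIofType K C (fun i : Fin (Fintype.card σ - 2) =>
    if (i : ℕ) < Fintype.card σ - 3 then 1 else 2)

/-- `macaulayBound t c = c^⟨t⟩`, computed greedily from the `t`-binomial expansion of `c`. -/
def macaulayBound : ℕ → ℕ → ℕ
  | 0, _ => 0
  | _ + 1, 0 => 0
  | t + 1, c + 1 =>
    let m := Nat.findGreatest (fun m => Nat.choose m (t + 1) ≤ c + 1) (c + t + 2)
    Nat.choose (m + 1) (t + 2) + macaulayBound t (c + 1 - Nat.choose m (t + 1))

/-- A 0-sequence: `c 0 = 1` and `c (t+1) ≤ (c t)^⟨t⟩` for all `t ≥ 1`. -/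
def IsZeroSequence (c : ℕ → ℕ) : Prop :=
  c 0 = 1 ∧ ∀ t : ℕ, 1 ≤ t → c (t + 1) ≤ macaulayBound t (c t)

/-- The first difference sequence of `b` (with `b (-1) = 0`). -/
def deltaSeq (b : ℕ → ℕ) : ℕ → ℕ
  | 0 => b 0
  | t + 1 => b (t + 1) - b t

/-- A differentiable 0-sequence: a 0-sequence whose first difference sequence is again a
0-sequence. -/
def IsDiffZeroSequence (b : ℕ → ℕ) : Prop :=
  IsZeroSequence b ∧ Monotone b ∧ IsZeroSequence (deltaSeq b)

/-- An `e`-sequence: a 0-sequence `b` for which there is a 0-sequence `c` with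
`b t = c ((e+1) * t)`. -/
def IsESequence (e : ℕ) (b : ℕ → ℕ) : Prop :=
  IsZeroSequence b ∧ ∃ c : ℕ → ℕ, IsZeroSequence c ∧ ∀ t, b t = c ((e + 1) * t)

/-- A differentiable `e`-sequence: a 0-sequence `b` for which there is a differentiable
0-sequence `c` with `b t = c ((e+1) * t)`. -/
def IsDiffESequence (e : ℕ) (b : ℕ → ℕ) : Prop :=
  IsZeroSequence b ∧ ∃ c : ℕ → ℕ, IsDiffZeroSequence c ∧ ∀ t, b t = c ((e + 1) * t)

/-- The function `μ₂(d,t,s)` of the paper. -/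
def mu2 (d t s : ℕ) : ℕ :=
  let m1 := d ^ 2 * t + d * (d + 3) / 2 - s
  if m1 ≤ (d + 1).choose 2 then
    (⌊((2 * d * (t + 1) + 3 : ℝ) - Real.sqrt (1 + 8 * m1)) / 2⌋).toNat
  else
    d * t - (m1 - (d + 1).choose 2 - 1) / d

/-- A (commutative, Noetherian) ring is Gorenstein if it has finite injective dimension as a
module over itself, i.e. there is `n` such that `Ext^i (M, A) = 0` for all modules `M` and all
`i > n`. -/
def IsGorensteinRing (A : Type) [CommRing A] : Prop :=
  IsNoetherianRing A ∧ ∃ n : ℕ, ∀ (M : ModuleCat.{0} A) (i : ℕ), n < i →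
    CategoryTheory.Limits.IsZero (((Ext A (ModuleCat.{0} A) i).obj (Opposite.op M)).obj
      (ModuleCat.of A A))


section AuxDegree

variable {τ : Type}

lemma degE [Fintype τ] (m : τ →₀ ℕ) : m.degree = ∑ j, m j := by
  rw [Finsupp.degree]
  exact Finset.sum_subset (Finset.subset_univ _)
    (fun x _ hx => by simpa using Finsupp.notMem_support_iff.mp hx)

lemma degA (a b : τ →₀ ℕ) : (a + b).degree = a.degree + b.degree := by
  simp only [Finsupp.degree_eq_weight_one, map_add]

lemma degS (j : τ) (k : ℕ) : (Finsupp.single j k).degree = k := by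
  rcases eq_or_ne k 0 with rfl | hk
  · simp
  · rw [Finsupp.degree_apply, Finsupp.support_single_ne_zero _ hk, Finset.sum_singleton,
      Finsupp.single_eq_same]

lemma degSmul (k : ℕ) (m : τ →₀ ℕ) : (k • m).degree = k * m.degree := by
  simp only [Finsupp.degree_eq_weight_one, map_nsmul, smul_eq_mul]

lemma degFinsetSum {α : Type} (s : Finset α) (g : α → (τ →₀ ℕ)) :
    (∑ a ∈ s, g a).degree = ∑ a ∈ s, (g a).degree := by
  simp only [Finsupp.degree_eq_weight_one, map_sum]

end AuxDegree
section AuxPhi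

variable (K : Type) [Field K] {n d : ℕ} {ι : Type}
  (e : ι ≃ {m : Fin (n + 1) →₀ ℕ // m.degree = d})

lemma prodMono {α : Type} (s : Finset α) (g : α → (Fin (n + 1) →₀ ℕ)) :
    (∏ a ∈ s, monomial (g a) (1 : K)) = monomial (∑ a ∈ s, g a) 1 := by
  induction s using Finset.cons_induction with
  | empty => simp
  | cons a s ha ih => rw [Finset.prod_cons, ih, Finset.sum_cons, monomial_mul, one_mul]

/-- The exponent vector `∑ i, f i • e i`. -/
def expSum (f : ι →₀ ℕ) : Fin (n + 1) →₀ ℕ := f.sum fun i k => k • (e i).1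

lemma expSum_zero : expSum e 0 = 0 := Finsupp.sum_zero_index

lemma expSum_add (f g : ι →₀ ℕ) : expSum e (f + g) = expSum e f + expSum e g :=
  Finsupp.sum_add_index' (by simp) (by intro a k1 k2; rw [add_smul])

lemma expSum_single (i : ι) (k : ℕ) : expSum e (Finsupp.single i k) = k • (e i).1 :=
  Finsupp.sum_single_index (by simp)

lemma degree_expSum (f : ι →₀ ℕ) : (expSum e f).degree = d * f.degree := by
  rw [expSum, Finsupp.sum, degFinsetSum, Finsupp.degree_apply]
  rw [Finset.sum_congr rfl (fun i _ => by rw [degSmul, (e i).2])]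
  rw [← Finset.sum_mul, mul_comm]

lemma phi_monomial (f : ι →₀ ℕ) (c : K) :
    phi K n d e (monomial f c) = monomial (expSum e f) c := by
  rw [phi, aeval_monomial]
  have h1 : (f.prod fun i k => (monomial (e i).1 (1 : K)) ^ k)
      = monomial (expSum e f) (1 : K) := by
    rw [Finsupp.prod]
    rw [Finset.prod_congr rfl (fun i _ => by rw [monomial_pow, one_pow])]
    rw [prodMono, expSum, Finsupp.sum]
  rw [h1, algebraMap_eq, C_mul_monomial, mul_one]

lemma eval_phi (v : Fin (n + 1) → K) (f : MvPolynomial ι K) :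
    eval v (phi K n d e f) = eval (vCoords K n d e v) f := by
  induction f using MvPolynomial.induction_on with
  | C a => simp [phi, algebraMap_eq]
  | add p q hp hq => simp [map_add, hp, hq]
  | mul_X p i hp =>
    simp only [map_mul, hp, eval_mul, eval_X]
    congr 1
    rw [phi, aeval_X, eval_monomial, one_mul]
    rfl

lemma monEval_single (v : Fin (n + 1) → K) (j : Fin (n + 1)) (k : ℕ) :
    monEval K v (Finsupp.single j k) = v j ^ k :=
  Finsupp.prod_single_index (pow_zero _)

lemma monEval_fintype (v : Fin (n + 1) → K) (m : Fin (n + 1) →₀ ℕ) :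
    monEval K v m = ∏ j, v j ^ m j :=
  Finsupp.prod_fintype _ _ fun _ => pow_zero _

lemma monEval_smul (c : K) (v : Fin (n + 1) → K) (m : Fin (n + 1) →₀ ℕ) :
    monEval K (c • v) m = c ^ m.degree * monEval K v m := by
  simp only [monEval_fintype, Pi.smul_apply, smul_eq_mul, mul_pow, degE]
  rw [Finset.prod_mul_distrib, Finset.prod_pow_eq_pow_sum]

lemma vCoords_smul (c : K) (v : Fin (n + 1) → K) :
    vCoords K n d e (c • v) = c ^ d • vCoords K n d e v := by
  funext i
  rw [vCoords, Pi.smul_apply, smul_eq_mul, vCoords, monEval_smul, (e i).2]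

lemma vCoords_ne_zero {v : Fin (n + 1) → K} (hv : v ≠ 0) :
    vCoords K n d e v ≠ 0 := by
  obtain ⟨j, hj⟩ := Function.ne_iff.mp hv
  intro h0
  have h1 : monEval K v (Finsupp.single j d) = 0 := by
    have h2 := congrFun h0 (e.symm ⟨Finsupp.single j d, degS j d⟩)
    simpa [vCoords, Equiv.apply_symm_apply] using h2
  rw [monEval_single] at h1
  exact pow_ne_zero d (by simpa using hj) h1

end AuxPhi
section AuxProj

variable (K : Type) [Field K] {n d : ℕ} {ι : Type} [Nonempty ι]
  (e : ι ≃ {m : Fin (n + 1) →₀ ℕ // m.degree = d})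

lemma veroneseMap_mk (v : Fin (n + 1) → K) (hv : v ≠ 0) :
    veroneseMap K n d e (Projectivization.mk K v hv) =
      Projectivization.mk K (vCoords K n d e v) (vCoords_ne_zero K e hv) := by
  set x := Projectivization.mk K v hv with hx
  obtain ⟨a, ha⟩ := (Projectivization.mk_eq_mk_iff K x.rep v x.rep_nonzero hv).mp
    (Projectivization.mk_rep x)
  have hc : vCoords K n d e x.rep = ((a : K) ^ d) • vCoords K n d e v := by
    rw [← ha, Units.smul_def, vCoords_smul]
  have hne : vCoords K n d e x.rep ≠ 0 := vCoords_ne_zero K e x.rep_nonzero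
  rw [veroneseMap, dif_pos hne]
  rw [Projectivization.mk_eq_mk_iff]
  exact ⟨(Units.mk0 ((a : K) ^ d) (pow_ne_zero d a.ne_zero)), by
    rw [Units.smul_def, Units.val_mk0, ← hc]⟩

variable {σ : Type}

lemma mem_pvi (W : Set (Projectivization K (σ → K))) (f : MvPolynomial σ K) :
    f ∈ pvi K W ↔ ∀ (v : σ → K) (hv : v ≠ 0), Projectivization.mk K v hv ∈ W →
      eval v f = 0 := by
  simp only [pvi, Ideal.mem_iInf, RingHom.mem_ker]
  exact ⟨fun h v hv hm => h ⟨v, hv⟩ hm, fun h v hm => h v.1 v.2 hm⟩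

lemma mem_pzl (I : Ideal (MvPolynomial σ K)) (x : Projectivization K (σ → K)) :
    x ∈ pzl K I ↔ ∀ f ∈ I, ∀ (v : σ → K) (hv : v ≠ 0),
      Projectivization.mk K v hv = x → eval v f = 0 := by
  constructor
  · exact fun h f hf v hv hm => h f hf ⟨v, hv⟩ hm
  · exact fun h f hf v hm => h f hf v.1 v.2 hm

lemma subset_pzl_pvi (W : Set (Projectivization K (σ → K))) : W ⊆ pzl K (pvi K W) :=
  fun x hx => (mem_pzl K _ _).mpr fun f hf v hv hmk =>
    (mem_pvi K _ _).mp hf v hv (hmk ▸ hx)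

variable [IsAlgClosed K]

lemma exists_dth_root (hd : 0 < d) {c : K} (hc : c ≠ 0) : ∃ r : K, r ≠ 0 ∧ r ^ d = c := by
  obtain ⟨r, hr⟩ := IsAlgClosed.exists_pow_nat_eq c hd
  exact ⟨r, fun h0 => hc (by rw [← hr, h0, zero_pow hd.ne']), hr⟩

lemma exists_rep_vCoords (hd : 0 < d) (v : Fin (n + 1) → K) (hv : v ≠ 0)
    (w : ι → K) (hw : w ≠ 0)
    (h : Projectivization.mk K w hw = veroneseMap K n d e (Projectivization.mk K v hv)) :
    ∃ (u : Fin (n + 1) → K) (hu : u ≠ 0),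
      Projectivization.mk K u hu = Projectivization.mk K v hv ∧ vCoords K n d e u = w := by
  rw [veroneseMap_mk] at h
  obtain ⟨a, ha⟩ := (Projectivization.mk_eq_mk_iff K w (vCoords K n d e v) hw
    (vCoords_ne_zero K e hv)).mp h
  obtain ⟨r, hr0, hrd⟩ := exists_dth_root K hd a.ne_zero
  refine ⟨r • v, smul_ne_zero hr0 hv, ?_, ?_⟩
  · rw [Projectivization.mk_eq_mk_iff]
    exact ⟨Units.mk0 r hr0, rfl⟩
  · rw [vCoords_smul, hrd, ← Units.smul_def, ha]

lemma mem_image_vMap_iff (hd : 0 < d) (W : Set (Projectivization K (Fin (n + 1) → K)))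
    (w : ι → K) (hw : w ≠ 0) :
    Projectivization.mk K w hw ∈ veroneseMap K n d e '' W ↔
      ∃ (v : Fin (n + 1) → K) (hv : v ≠ 0),
        Projectivization.mk K v hv ∈ W ∧ vCoords K n d e v = w := by
  constructor
  · rintro ⟨x, hxW, hx⟩
    obtain ⟨u, hu, humk, huc⟩ := exists_rep_vCoords K e hd x.rep x.rep_nonzero w hw
      (by rw [← hx, Projectivization.mk_rep])
    exact ⟨u, hu, by rwa [humk, Projectivization.mk_rep], huc⟩
  · rintro ⟨v, hv, hvW, rfl⟩
    refine ⟨Projectivization.mk K v hv, hvW, ?_⟩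
    rw [veroneseMap_mk]

lemma mem_pvi_image (hd : 0 < d) (W : Set (Projectivization K (Fin (n + 1) → K)))
    (f : MvPolynomial ι K) :
    f ∈ pvi K (veroneseMap K n d e '' W) ↔ phi K n d e f ∈ pvi K W := by
  rw [mem_pvi, mem_pvi]
  constructor
  · intro H v hv hvW
    rw [eval_phi]
    exact H (vCoords K n d e v) (vCoords_ne_zero K e hv)
      ((mem_image_vMap_iff K e hd W _ _).mpr ⟨v, hv, hvW, rfl⟩)
  · intro H w hw hwm
    obtain ⟨v, hv, hvW, rfl⟩ := (mem_image_vMap_iff K e hd W w hw).mp hwm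
    rw [← eval_phi]
    exact H v hv hvW

end AuxProj
section AuxHomog

variable (K : Type) [Field K] {σ : Type}

lemma isHomog_degree {p : MvPolynomial σ K} {t : ℕ} (hp : p.IsHomogeneous t)
    {m : σ →₀ ℕ} (h : coeff m p ≠ 0) : m.degree = t := by
  rw [Finsupp.degree_eq_weight_one]
  exact hp h

lemma eval_smul_of_isHomogeneous {p : MvPolynomial σ K} {s : ℕ}
    (hp : p.IsHomogeneous s) (c : K) (u : σ → K) :
    eval (c • u) p = c ^ s * eval u p := by
  rw [eval_eq, eval_eq, Finset.mul_sum]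
  refine Finset.sum_congr rfl fun m hm => ?_
  have hdeg : m.degree = s := isHomog_degree K hp (mem_support_iff.mp hm)
  have : (∏ i ∈ m.support, (c • u) i ^ m i) =
      c ^ s * ∏ i ∈ m.support, u i ^ m i := by
    have : ∀ i ∈ m.support, (c • u) i ^ m i = c ^ m i * u i ^ m i := by
      intro i _; rw [Pi.smul_apply, smul_eq_mul, mul_pow]
    rw [Finset.prod_congr rfl this, Finset.prod_mul_distrib,
      Finset.prod_pow_eq_pow_sum, ← Finsupp.degree_apply, hdeg]
  rw [this]; ring

lemma eval_smul_expand (c : K) (u : σ → K) (g : MvPolynomial σ K) :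
    eval (c • u) g = ∑ s ∈ Finset.range (g.totalDegree + 1),
      c ^ s * eval u (homogeneousComponent s g) := by
  conv_lhs => rw [← sum_homogeneousComponent g, map_sum]
  exact Finset.sum_congr rfl fun s _ =>
    eval_smul_of_isHomogeneous K (homogeneousComponent_isHomogeneous s g) c u

variable [CharZero K]

lemma eval_homogeneousComponent_eq_zero (u : σ → K) (g : MvPolynomial σ K)
    (H : ∀ c : K, c ≠ 0 → eval (c • u) g = 0) (s : ℕ) :
    eval u (homogeneousComponent s g) = 0 := by
  set P : Polynomial K := ∑ i ∈ Finset.range (g.totalDegree + 1),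
    Polynomial.C (eval u (homogeneousComponent i g)) * Polynomial.X ^ i with hP
  have hPeval : ∀ c : K, P.eval c = eval (c • u) g := by
    intro c
    rw [eval_smul_expand, hP, Polynomial.eval_finset_sum]
    exact Finset.sum_congr rfl fun i _ => by
      rw [Polynomial.eval_mul, Polynomial.eval_C, Polynomial.eval_pow,
        Polynomial.eval_X, mul_comm]
  have hP0 : P = 0 := by
    apply Polynomial.eq_zero_of_infinite_isRoot
    apply Set.Infinite.mono (s := {c : K | c ≠ 0})
    · intro c hc
      simp only [Set.mem_setOf_eq, Polynomial.IsRoot]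
      rw [hPeval]; exact H c hc
    · exact Set.Finite.infinite_compl (Set.finite_singleton (0 : K))
  by_cases hs : s < g.totalDegree + 1
  · have := congrArg (fun q => Polynomial.coeff q s) hP0
    simp only [Polynomial.coeff_zero, hP, Polynomial.finset_sum_coeff,
      Polynomial.coeff_C_mul, Polynomial.coeff_X_pow] at this
    rwa [Finset.sum_eq_single s (fun i _ his => by simp [Ne.symm his])
      (fun hns => absurd (Finset.mem_range.mpr hs) hns), if_pos rfl, mul_one] at this
  · have h0 : homogeneousComponent s g = 0 :=
      homogeneousComponent_eq_zero s g (by omega)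
    rw [h0, map_zero]

lemma homogeneousComponent_mem_pvi (W : Set (Projectivization K (σ → K)))
    {g : MvPolynomial σ K} (hg : g ∈ pvi K W) (s : ℕ) :
    homogeneousComponent s g ∈ pvi K W := by
  rw [mem_pvi] at hg ⊢
  intro v hv hvW
  apply eval_homogeneousComponent_eq_zero
  intro c hc
  have hcv : c • v ≠ 0 := smul_ne_zero hc hv
  refine hg (c • v) hcv ?_
  have : Projectivization.mk K (c • v) hcv = Projectivization.mk K v hv := by
    rw [Projectivization.mk_eq_mk_iff]
    exact ⟨Units.mk0 c hc, rfl⟩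
  rwa [this]

end AuxHomog
section AuxSurj

variable (K : Type) [Field K] {n d : ℕ} {ι : Type}
  (e : ι ≃ {m : Fin (n + 1) →₀ ℕ // m.degree = d})

lemma exists_le_degree (k : ℕ) : ∀ (m : Fin (n + 1) →₀ ℕ), k ≤ m.degree →
    ∃ a : Fin (n + 1) →₀ ℕ, a ≤ m ∧ a.degree = k := by
  induction k with
  | zero => exact fun m _ => ⟨0, zero_le, map_zero _⟩
  | succ k ih =>
    intro m hm
    have hm0 : m ≠ 0 := by
      intro h0; rw [h0, map_zero] at hm; omega
    obtain ⟨j, hj⟩ : ∃ j, m j ≠ 0 := by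
      by_contra hc; push_neg at hc
      exact hm0 (Finsupp.ext fun a => hc a)
    have hsle : Finsupp.single j 1 ≤ m := by
      rw [Finsupp.le_iff]
      intro a _
      rcases eq_or_ne a j with rfl | hne
      · rw [Finsupp.single_eq_same]; omega
      · rw [Finsupp.single_eq_of_ne' (Ne.symm hne)]; omega
    set m' := m - Finsupp.single j 1 with hm'
    have hadd : m' + Finsupp.single j 1 = m := tsub_add_cancel_of_le hsle
    have hdeg : m.degree = m'.degree + 1 := by
      rw [← hadd, degA, degS]
    obtain ⟨a', ha'le, ha'deg⟩ := ih m' (by omega)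
    refine ⟨a' + Finsupp.single j 1, ?_, by rw [degA, degS, ha'deg]⟩
    calc a' + Finsupp.single j 1 ≤ m' + Finsupp.single j 1 :=
          add_le_add_left ha'le _
      _ = m := hadd

lemma exists_expSum (t : ℕ) : ∀ (m : Fin (n + 1) →₀ ℕ), m.degree = d * t →
    ∃ f : ι →₀ ℕ, f.degree = t ∧ expSum e f = m := by
  induction t with
  | zero =>
    intro m hm
    rw [mul_zero, Finsupp.degree_eq_zero_iff] at hm
    exact ⟨0, map_zero _, by rw [expSum_zero, hm]⟩
  | succ t ih =>
    intro m hm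
    obtain ⟨a, hale, hadeg⟩ := exists_le_degree d m (by rw [hm, Nat.mul_succ]; omega)
    set m' := m - a with hm'
    have hadd : m' + a = m := tsub_add_cancel_of_le hale
    have hdeg : m'.degree = d * t := by
      have : m.degree = m'.degree + a.degree := by rw [← hadd, degA]
      rw [hadeg] at this; rw [hm, Nat.mul_succ] at this; omega
    obtain ⟨f', hf'deg, hf'⟩ := ih m' hdeg
    refine ⟨f' + Finsupp.single (e.symm ⟨a, hadeg⟩) 1, ?_, ?_⟩
    · rw [degA, degS, hf'deg]
    · rw [expSum_add, expSum_single, hf', Equiv.apply_symm_apply, one_smul]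
      exact hadd

lemma phi_isHomogeneous {t : ℕ} {p : MvPolynomial ι K} (hp : p.IsHomogeneous t) :
    (phi K n d e p).IsHomogeneous (d * t) := by
  conv_lhs => rw [p.as_sum, map_sum]
  apply MvPolynomial.IsHomogeneous.sum
  intro m hm
  rw [phi_monomial]
  apply isHomogeneous_monomial
  rw [degree_expSum, isHomog_degree K hp (mem_support_iff.mp hm)]

lemma exists_phi_preimage (t : ℕ) (p : MvPolynomial (Fin (n + 1)) K)
    (hp : p.IsHomogeneous (d * t)) :
    ∃ q : MvPolynomial ι K, q.IsHomogeneous t ∧ phi K n d e q = p := by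
  classical
  have hF : ∀ m ∈ p.support, ∃ f : ι →₀ ℕ, f.degree = t ∧ expSum e f = m :=
    fun m hm => exists_expSum e t m (isHomog_degree K hp (mem_support_iff.mp hm))
  choose F hFdeg hFexp using hF
  refine ⟨∑ m ∈ p.support.attach, monomial (F m.1 m.2) (coeff m.1 p), ?_, ?_⟩
  · apply MvPolynomial.IsHomogeneous.sum
    intro m _
    exact isHomogeneous_monomial _ (hFdeg m.1 m.2)
  · rw [map_sum]
    rw [Finset.sum_congr rfl (fun m _ => by rw [phi_monomial, hFexp m.1 m.2])]
    rw [Finset.sum_attach p.support fun m => monomial m (coeff m p)]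
    exact p.support_sum_monomial_coeff

end AuxSurj
section AuxHilb

variable (K : Type) [Field K] [IsAlgClosed K] {n d : ℕ} {ι : Type} [Nonempty ι]
  (e : ι ≃ {m : Fin (n + 1) →₀ ℕ // m.degree = d})

lemma hilb_image (hd : 0 < d) (W : Set (Projectivization K (Fin (n + 1) → K))) (t : ℕ) :
    hilb K (veroneseMap K n d e '' W) t = hilb K W (d * t) := by
  classical
  set I := pvi K W with hI
  set St := homogeneousSubmodule ι K t with hSt
  set Rdt := homogeneousSubmodule (Fin (n + 1)) K (d * t) with hRdt
  have hmaps : ∀ x : St, phi K n d e x.1 ∈ Rdt := fun x => phi_isHomogeneous K e x.2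
  set Φ : St →ₗ[K] Rdt :=
    LinearMap.codRestrict Rdt ((phi K n d e).toLinearMap.domRestrict St) hmaps with hΦ
  set q2 : Submodule K Rdt := (Submodule.restrictScalars K I).comap Rdt.subtype with hq2
  set g : St →ₗ[K] (Rdt ⧸ q2) := q2.mkQ.comp Φ with hg
  have hker : LinearMap.ker g =
      (Submodule.restrictScalars K (pvi K (veroneseMap K n d e '' W))).comap St.subtype := by
    ext x
    rw [LinearMap.mem_ker, hg, LinearMap.comp_apply, Submodule.mkQ_apply,
      Submodule.Quotient.mk_eq_zero]
    simp only [Submodule.mem_comap, Submodule.coe_subtype, Submodule.restrictScalars_mem, hq2]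
    exact (mem_pvi_image K e hd W x.1).symm
  have hsurj : Function.Surjective g := by
    intro y
    obtain ⟨p, rfl⟩ := Submodule.mkQ_surjective q2 y
    obtain ⟨q, hqhom, hq⟩ := exists_phi_preimage K e t p.1 p.2
    refine ⟨⟨q, hqhom⟩, ?_⟩
    have hφ : Φ ⟨q, hqhom⟩ = p := Subtype.ext hq
    rw [hg, LinearMap.comp_apply, hφ]
  have e1 := g.quotKerEquivOfSurjective hsurj
  have e2 : (St ⧸ (Submodule.restrictScalars K
        (pvi K (veroneseMap K n d e '' W))).comap St.subtype) ≃ₗ[K]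
      (St ⧸ LinearMap.ker g) :=
    Submodule.quotEquivOfEq _ _ hker.symm
  rw [hilb, hilb]
  exact (e2.trans e1).finrank_eq

end AuxHilb
section AuxRel

variable (K : Type) [Field K] {n d : ℕ} {ι : Type}
  (e : ι ≃ {m : Fin (n + 1) →₀ ℕ // m.degree = d})

lemma prodW_single (w : ι → K) (i : ι) (k : ℕ) :
    ((Finsupp.single i k).prod fun i k => w i ^ k) = w i ^ k :=
  Finsupp.prod_single_index (pow_zero _)

lemma prodW_add (w : ι → K) (f g : ι →₀ ℕ) :
    ((f + g).prod fun i k => w i ^ k) =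
      (f.prod fun i k => w i ^ k) * (g.prod fun i k => w i ^ k) :=
  Finsupp.prod_add_index' (fun _ => pow_zero _) (fun _ k1 k2 => pow_add _ _ _)

lemma prodW_const {τ : Type} (m : τ →₀ ℕ) (b : K) :
    (m.prod fun _ k => b ^ k) = b ^ m.degree :=
  Finset.prod_pow_eq_pow_sum _ _ _

lemma sum_smul_single (m : Fin (n + 1) →₀ ℕ) (c : ℕ) :
    (m.sum fun j k => k • Finsupp.single j c) = c • m := by
  ext l
  rw [Finsupp.sum_apply]
  have h1 : (m.sum fun j k => (k • Finsupp.single j c) l) =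
      m.sum fun j k => if j = l then k * c else 0 := by
    apply Finsupp.sum_congr
    intro j _
    rw [Finsupp.smul_apply, Finsupp.single_apply, smul_eq_mul]
    split_ifs <;> simp
  rw [h1, Finsupp.sum_ite_eq' m l fun j k => k * c]
  rw [Finsupp.smul_apply, smul_eq_mul]
  split_ifs with hmem
  · rw [mul_comm]
  · rw [Finsupp.notMem_support_iff.mp hmem, mul_zero]

lemma sum_single_const (m : Fin (n + 1) →₀ ℕ) (a : Fin (n + 1)) (c : ℕ) :
    (m.sum fun _ k => Finsupp.single a (k * c)) = Finsupp.single a (m.degree * c) := by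
  rw [← Finsupp.single_sum m (fun _ k => k * c) a]
  congr 1
  rw [Finsupp.sum, ← Finset.sum_mul, Finsupp.degree_apply]

lemma exists_vCoords_of_relations (hd : 0 < d) (w : ι → K) (hw : w ≠ 0)
    [IsAlgClosed K]
    (Hrel : ∀ f g : ι →₀ ℕ, expSum e f = expSum e g →
      (f.prod fun i k => w i ^ k) = (g.prod fun i k => w i ^ k)) :
    ∃ v : Fin (n + 1) → K, v ≠ 0 ∧ vCoords K n d e v = w := by
  classical
  obtain ⟨i0, hi0⟩ := Function.ne_iff.mp hw
  have hi0' : w i0 ≠ 0 := by simpa using hi0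
  set mstar := (e i0).1 with hmstar
  set idx : Fin (n + 1) → ι := fun j => e.symm ⟨Finsupp.single j d, degS j d⟩ with hidxdef
  have hidx : ∀ j, (e (idx j)).1 = Finsupp.single j d := fun j =>
    congrArg Subtype.val (Equiv.apply_symm_apply e _)
  have hinj : Function.Injective idx := by
    intro a b hab
    have h := congrArg (fun i => (e i).1) hab
    simp only [hidx] at h
    exact Finsupp.single_left_injective hd.ne' h
  -- Relation 1
  have hsum1 : expSum e (Finsupp.single i0 d) = expSum e (mstar.mapDomain idx) := by
    rw [expSum_single, expSum, Finsupp.sum_mapDomain_index_inj hinj]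
    have h2 : (mstar.sum fun j k => k • (e (idx j)).1) =
        mstar.sum fun j k => k • Finsupp.single j d := by
      apply Finsupp.sum_congr; intro j _; rw [hidx]
    rw [h2, sum_smul_single]
  have hrel1 : w i0 ^ d = mstar.prod fun j k => w (idx j) ^ k := by
    have h := Hrel _ _ hsum1
    rwa [prodW_single, Finsupp.prod_mapDomain_index_inj hinj] at h
  -- find j0
  have hmstar0 : mstar ≠ 0 := by
    intro h0
    have := (e i0).2
    rw [← hmstar, h0, map_zero] at this
    omega
  obtain ⟨j0, hj0⟩ := Finsupp.support_nonempty_iff.mpr hmstar0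
  have hwj0 : w (idx j0) ≠ 0 := by
    intro h0
    have hne : (mstar.prod fun j k => w (idx j) ^ k) ≠ 0 := by
      rw [← hrel1]; exact pow_ne_zero _ hi0'
    apply hne
    apply Finset.prod_eq_zero hj0
    show w (idx j0) ^ mstar j0 = 0
    rw [h0, zero_pow (Finsupp.mem_support_iff.mp hj0)]
  set c := w (idx j0) with hc
  obtain ⟨r, hr0, hrd⟩ := exists_dth_root K hd hwj0
  -- the affine preimage candidate
  set uExp : Fin (n + 1) → (Fin (n + 1) →₀ ℕ) :=
    fun j => Finsupp.single j0 (d - 1) + Finsupp.single j 1 with huExpdef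
  have huExpdeg : ∀ j, (uExp j).degree = d := by
    intro j; rw [huExpdef, degA, degS, degS]; omega
  set uidx : Fin (n + 1) → ι := fun j => e.symm ⟨uExp j, huExpdeg j⟩ with huidxdef
  have huidx : ∀ j, (e (uidx j)).1 = uExp j := fun j =>
    congrArg Subtype.val (Equiv.apply_symm_apply e _)
  have huinj : Function.Injective uidx := by
    intro a b hab
    have h := congrArg (fun i => (e i).1) hab
    simp only [huidx, huExpdef] at h
    by_contra hne
    have hba : b ≠ a := fun hba => hne hba.symm
    have h2 := DFunLike.congr_fun h a
    rw [Finsupp.add_apply, Finsupp.add_apply, Finsupp.single_eq_same,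
      Finsupp.single_eq_of_ne' hba] at h2
    omega
  -- Relation 2
  have hrel2 : ∀ i : ι, ((e i).1.prod fun j k => w (uidx j) ^ k) = c ^ (d - 1) * w i := by
    intro i
    have hsum2 : expSum e (Finsupp.single (idx j0) (d - 1) + Finsupp.single i 1) =
        expSum e ((e i).1.mapDomain uidx) := by
      rw [expSum_add, expSum_single, expSum_single, hidx, one_smul,
        expSum, Finsupp.sum_mapDomain_index_inj huinj]
      have h2 : ((e i).1.sum fun j k => k • (e (uidx j)).1) =
          ((e i).1.sum fun j k => k • Finsupp.single j0 (d - 1))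
            + ((e i).1.sum fun j k => k • Finsupp.single j 1) := by
        rw [← Finsupp.sum_add]
        apply Finsupp.sum_congr
        intro j _
        rw [huidx, huExpdef, smul_add]
      rw [h2]
      have h3 : ((e i).1.sum fun j k => k • Finsupp.single j0 (d - 1)) =
          Finsupp.single j0 (d * (d - 1)) := by
        have h4 : ((e i).1.sum fun j k => k • Finsupp.single j0 (d - 1)) =
            (e i).1.sum fun _ k => Finsupp.single j0 (k * (d - 1)) := by
          apply Finsupp.sum_congr
          intro j _
          rw [Finsupp.smul_single, smul_eq_mul]
        rw [h4, sum_single_const, (e i).2]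
      rw [h3, sum_smul_single, one_smul, Finsupp.smul_single, smul_eq_mul, mul_comm (d - 1) d]
    have h := Hrel _ _ hsum2
    rw [prodW_add, prodW_single, prodW_single, pow_one,
      Finsupp.prod_mapDomain_index_inj huinj] at h
    exact h.symm
  -- the vector v
  have hru : (r ^ (d - 1) : K) ≠ 0 := pow_ne_zero _ hr0
  set v : Fin (n + 1) → K := fun j => w (uidx j) * (r ^ (d - 1))⁻¹ with hvdef
  have hexp : uExp j0 = Finsupp.single j0 d := by
    rw [huExpdef]
    show Finsupp.single j0 (d - 1) + Finsupp.single j0 1 = Finsupp.single j0 d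
    rw [← Finsupp.single_add]
    congr 1
    omega
  have huj0 : uidx j0 = idx j0 := congrArg e.symm (Subtype.ext hexp)
  have hvj0 : v j0 ≠ 0 := by
    rw [hvdef]
    simp only [huj0]
    exact mul_ne_zero hwj0 (inv_ne_zero hru)
  refine ⟨v, fun h0 => hvj0 (congrFun h0 j0), ?_⟩
  funext i
  rw [vCoords, monEval]
  have h5 : ((e i).1.prod fun j k => v j ^ k) =
      ((e i).1.prod fun j k => w (uidx j) ^ k) *
        ((e i).1.prod fun _ k => ((r ^ (d - 1))⁻¹) ^ k) := by
    rw [← Finsupp.prod_mul]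
    apply Finsupp.prod_congr
    intro j _
    rw [hvdef, mul_pow]
  rw [h5, hrel2 i, prodW_const, (e i).2, inv_pow, ← pow_mul, mul_comm (d - 1) d, pow_mul, hrd]
  have hcd : (c : K) ^ (d - 1) ≠ 0 := pow_ne_zero _ hwj0
  field_simp

end AuxRel
section AuxClosed

variable (K : Type) [Field K] [IsAlgClosed K] [CharZero K] {n d : ℕ} {ι : Type} [Nonempty ι]
  (e : ι ≃ {m : Fin (n + 1) →₀ ℕ // m.degree = d})

lemma isClosed_image (hd : 0 < d) (W : Set (Projectivization K (Fin (n + 1) → K)))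
    (hW : IsClosedSubvariety K W) :
    IsClosedSubvariety K (veroneseMap K n d e '' W) := by
  refine Set.Subset.antisymm (subset_pzl_pvi K _) ?_
  intro x hx
  rw [mem_pzl] at hx
  set w := x.rep with hwdef
  have hw : w ≠ 0 := x.rep_nonzero
  have hmkw : Projectivization.mk K w hw = x := Projectivization.mk_rep x
  have Hrel : ∀ f g : ι →₀ ℕ, expSum e f = expSum e g →
      (f.prod fun i k => w i ^ k) = (g.prod fun i k => w i ^ k) := by
    intro f g hfg
    have hker : (monomial f 1 - monomial g 1 : MvPolynomial ι K) ∈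
        pvi K (veroneseMap K n d e '' W) := by
      rw [mem_pvi_image K e hd, map_sub, phi_monomial, phi_monomial, hfg, sub_self]
      exact zero_mem _
    have h0 := hx _ hker w hw hmkw
    rwa [map_sub, eval_monomial, eval_monomial, one_mul, one_mul, sub_eq_zero] at h0
  obtain ⟨v, hv, hvc⟩ := exists_vCoords_of_relations K e hd w hw Hrel
  have hmkv : Projectivization.mk K v hv ∈ W := by
    rw [hW, mem_pzl]
    intro g hg v' hv' hmk
    obtain ⟨a, ha⟩ := (Projectivization.mk_eq_mk_iff K v' v hv' hv).mp hmk
    rw [← ha, Units.smul_def, eval_smul_expand]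
    apply Finset.sum_eq_zero
    intro s _
    have hcomp : homogeneousComponent s g ∈ pvi K W :=
      homogeneousComponent_mem_pvi K W hg s
    have hchom : (homogeneousComponent s g).IsHomogeneous s :=
      homogeneousComponent_isHomogeneous s g
    have hpow : ((homogeneousComponent s g) ^ d) ∈ pvi K W :=
      Ideal.pow_mem_of_mem _ hcomp d hd
    have hpowhom : ((homogeneousComponent s g) ^ d).IsHomogeneous (d * s) := by
      have h := hchom.pow d
      rwa [mul_comm] at h
    obtain ⟨q, hqhom, hq⟩ := exists_phi_preimage K e s _ hpowhom
    have hqpvi : q ∈ pvi K (veroneseMap K n d e '' W) := by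
      rw [mem_pvi_image K e hd, hq]; exact hpow
    have h0 := hx q hqpvi w hw hmkw
    rw [← hvc, ← eval_phi, hq, map_pow] at h0
    rw [pow_eq_zero_iff hd.ne' |>.mp h0, mul_zero]
  have hxv : x = veroneseMap K n d e (Projectivization.mk K v hv) := by
    rw [veroneseMap_mk K e v hv, ← hmkw, Projectivization.mk_eq_mk_iff]
    exact ⟨1, by rw [one_smul, hvc]⟩
  rw [hxv]
  exact Set.mem_image_of_mem _ hmkv

lemma isClosed_preimage (hd : 0 < d) (X : Set (Projectivization K (ι → K)))
    (hX : IsClosedSubvariety K X) (hXV : X ⊆ veroneseVariety K n d e) :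
    IsClosedSubvariety K (veroneseMap K n d e ⁻¹' X) ∧
      veroneseMap K n d e '' (veroneseMap K n d e ⁻¹' X) = X := by
  have himg : veroneseMap K n d e '' (veroneseMap K n d e ⁻¹' X) = X :=
    Set.image_preimage_eq_of_subset hXV
  refine ⟨?_, himg⟩
  refine Set.Subset.antisymm (subset_pzl_pvi K _) ?_
  intro x hx
  rw [mem_pzl] at hx
  show veroneseMap K n d e x ∈ X
  rw [hX, mem_pzl]
  intro f hf w hw hmk
  rw [← himg, mem_pvi_image K e hd] at hf
  rw [← Projectivization.mk_rep x] at hmk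
  obtain ⟨u, hu, humk, huc⟩ :=
    exists_rep_vCoords K e hd x.rep x.rep_nonzero w hw hmk
  rw [← huc, ← eval_phi]
  exact hx (phi K n d e f) hf u hu (by rw [humk, Projectivization.mk_rep])

end AuxClosed
theorem statement4 (n d N : ℕ) (hn : 0 < n) (hd : 0 < d)
    (hN : N = (n + d).choose d - 1)
    (K : Type) [Field K] [IsAlgClosed K] [CharZero K]
    (e : Fin (N + 1) ≃ {m : Fin (n + 1) →₀ ℕ // m.degree = d})
    (h : ℕ → ℕ)
    (hh : ∃ Z : Set (Projectivization K (Fin (N + 1) → K)),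
      IsClosedSubvariety K Z ∧ ∀ t, hilb K Z t = h t) :
    (∃ X : Set (Projectivization K (Fin (N + 1) → K)), IsClosedSubvariety K X ∧
        X ⊆ veroneseVariety K n d e ∧ ∀ t, hilb K X t = h t) ↔
      ∃ k : ℕ → ℕ, (∃ W : Set (Projectivization K (Fin (n + 1) → K)),
        IsClosedSubvariety K W ∧ ∀ t, hilb K W t = k t) ∧ ∀ t, h t = k (d * t) := by
  constructor
  · rintro ⟨X, hXc, hXV, hXh⟩
    obtain ⟨hWc, himg⟩ := isClosed_preimage K e hd X hXc hXV
    refine ⟨hilb K (veroneseMap K n d e ⁻¹' X),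
      ⟨veroneseMap K n d e ⁻¹' X, hWc, fun t => rfl⟩, fun t => ?_⟩
    have hx : hilb K X t = hilb K (veroneseMap K n d e ⁻¹' X) (d * t) := by
      conv_lhs => rw [← himg]
      rw [hilb_image K e hd]
    rw [← hXh t, hx]
  · rintro ⟨k, ⟨W, hWc, hWk⟩, hhk⟩
    refine ⟨veroneseMap K n d e '' W, isClosed_image K e hd W hWc,
      Set.image_subset_range _ _, fun t => ?_⟩
    rw [hilb_image K e hd, hWk]
    exact (hhk t).symm

end VeroneseCI
end
end

section
/- Let d, t ∈ ℕ with d ≥ 1, and let h: {1,2,…,d} → ℕ be a function for which there exists i_0 ∈ {1,2,…,d} such that h(i) = dt + i + 1 for all 1 ≤ i ≤ i_0 − 1, and h(i) ≥ h(i+1) for all i_0 ≤ i ≤ d − 1. Then h(d) ≤ μ2(d, t, Σ_{i=1}^d h(i)). Moreover the inequality is sharp: for each admissible value s of the sum there is such a function with Σ_{i=1}^d h(i) = s and h(d) = μ2(d,t,s). -/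
open MvPolynomial

noncomputable section

namespace VeroneseCI

variable (K : Type) [Field K]

variable {σ : Type}

/-! ### Auxiliary lemmas for `statement8` -/

lemma aux_half_mul (d : ℕ) : 2 * (d * (d + 3) / 2) = d * (d + 3) := by
  apply Nat.mul_div_cancel'
  obtain ⟨c, hc⟩ := Nat.even_mul_succ_self d
  have h : d * (d + 3) = d * (d + 1) + 2 * d := by ring
  exact ⟨c + d, by omega⟩

lemma aux_choose2 (d : ℕ) : 2 * ((d + 1).choose 2) = d * (d + 1) := by
  rw [Nat.choose_two_right]
  simp only [Nat.add_sub_cancel]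
  obtain ⟨c, hc⟩ := Nat.even_mul_succ_self d
  have h : (d + 1) * d = d * (d + 1) := by ring
  omega

lemma aux_sum_arith (c j : ℕ) :
    2 * (∑ i ∈ Finset.Ioc 0 j, (c + i + 1)) = 2 * (j * c) + j * (j + 3) := by
  induction j with
  | zero => simp
  | succ n ih =>
    rw [Finset.sum_Ioc_succ_top (Nat.zero_le _)]
    zify at ih ⊢
    linear_combination ih

lemma aux_floorA (a m r : ℕ) (hr : r ≤ a) (hhi : 2*m ≤ r*(r+1)) (hlo : r = 0 ∨ r*(r-1) < 2*m) :
    (⌊((2*a + 3 : ℝ) - Real.sqrt (1 + 8*m)) / 2⌋).toNat = a + 1 - r := by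
  have key : ⌊((2*a + 3 : ℝ) - Real.sqrt (1 + 8*m)) / 2⌋ = (a : ℤ) + 1 - r := by
    rw [Int.floor_eq_iff]
    set x := Real.sqrt (1 + 8*m) with hx
    have hx0 : 0 ≤ x := Real.sqrt_nonneg _
    have hx2 : x^2 = 1 + 8*m := Real.sq_sqrt (by positivity)
    have hhi' : (2*(m:ℝ)) ≤ r*(r+1) := by exact_mod_cast hhi
    have hub : x ≤ 2*r + 1 := by nlinarith
    have hlb : (2*(r:ℝ) - 1) < x := by
      rcases Nat.eq_zero_or_pos r with h | hr1
      · subst h; simp only [Nat.cast_zero]; nlinarith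
      · have h0 : r*(r-1) < 2*m := by
          rcases hlo with h0 | h0
          · omega
          · exact h0
        have hc : ((r:ℝ)) * (r - 1) < 2*m := by
          have := (Nat.cast_lt (α := ℝ)).2 h0
          push_cast [Nat.cast_sub hr1] at this
          linarith
        nlinarith
    constructor
    · push_cast; nlinarith
    · push_cast; nlinarith
  rw [key]
  omega

/-- `rOf m` is the unique `r` with `binom(r,2) < m ≤ binom(r+1,2)` (and `0` for `m = 0`). -/
def rOf (m : ℕ) : ℕ := (Nat.sqrt (8*m) + 1) / 2

lemma rOf_spec (m : ℕ) : 2*m ≤ rOf m * (rOf m + 1) ∧ (rOf m = 0 ∨ rOf m * (rOf m - 1) < 2*m) := by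
  have h1 : Nat.sqrt (8*m) ^ 2 ≤ 8*m := Nat.sqrt_le' (8*m)
  have h2 : 8*m < (Nat.sqrt (8*m) + 1) ^ 2 := Nat.lt_succ_sqrt' (8*m)
  set q := Nat.sqrt (8*m) with hq
  have hr : rOf m = (q + 1) / 2 := rfl
  set r := rOf m with hrr
  have hr2 : 2*r ≤ q + 1 ∧ q + 1 ≤ 2*r + 1 := by omega
  constructor
  · nlinarith [hr2.1, hr2.2]
  · rcases Nat.eq_zero_or_pos r with h | h
    · left; exact h
    · right
      have hq2r : 2*r - 1 ≤ q := by omega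
      have h4 : (2*r-1)^2 ≤ q^2 := Nat.pow_le_pow_left hq2r 2
      have h3 : (2*r-1)^2 + 4*r = 4*(r*r) + 1 := by
        have : 2*r - 1 + 1 = 2*r := by omega
        nlinarith [this]
      have h5 : r * (r-1) + r = r * r := by
        cases r with
        | zero => rfl
        | succ n => simp [Nat.succ_sub_one]; ring
      omega

lemma rOf_le (m d : ℕ) (h : 2*m ≤ d*(d+1)) : rOf m ≤ d := by
  rcases rOf_spec m with ⟨h1, h2⟩
  rcases h2 with h0 | h0
  · omega
  · by_contra hc
    push_neg at hc
    have h3 : (d+1)*d ≤ rOf m * (rOf m - 1) := Nat.mul_le_mul (by omega) (by omega)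
    have h4 : (d+1)*d = d*(d+1) := by ring
    omega

lemma mu2_eq1 (d t s m : ℕ) (hm : m = d^2*t + d*(d+3)/2 - s) (h : m ≤ (d+1).choose 2)
    (hrd : rOf m ≤ d) :
    mu2 d t s = d*t + d + 1 - rOf m := by
  subst hm
  set m := d^2*t + d*(d+3)/2 - s with hm
  have he : mu2 d t s = (⌊((2 * d * (t + 1) + 3 : ℝ) - Real.sqrt (1 + 8 * m)) / 2⌋).toNat := by
    rw [mu2, if_pos h]
  rw [he]
  have hcast : ((2 * d * (t + 1) + 3 : ℝ)) = 2 * ((d*t+d : ℕ) : ℝ) + 3 := by push_cast; ring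
  rw [hcast]
  rcases rOf_spec m with ⟨h1, h2⟩
  exact aux_floorA (d*t+d) m (rOf m) (by omega) h1 h2

lemma mu2_eq2 (d t s m : ℕ) (hm : m = d^2*t + d*(d+3)/2 - s) (h : ¬ (m ≤ (d+1).choose 2)) :
    mu2 d t s = d*t - (m - (d+1).choose 2 - 1)/d := by
  subst hm
  rw [mu2, if_neg h]

lemma contra1 (dt dd hdv k r m : ℤ) (hk : 1 ≤ k) (hm : 0 ≤ m)
    (hstep : 2*k*hdv ≤ 2*k*dt + k*(2*dd-k+3) - 2*m)
    (hc : 2*k*(dt + dd + 2) ≤ 2*k*(hdv + r))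
    (hlo : r = 0 ∨ r*(r-1) < 2*m) : False := by
  have hsq : r - k ≤ (r-k)^2 := Int.le_self_sq _
  have hsqk : k ≤ k^2 := Int.le_self_sq _
  rcases hlo with h0 | h0
  · subst h0; nlinarith
  · nlinarith

lemma contra2 (dt dd hdv k n m C : ℤ) (hk : 1 ≤ k) (hkd : k ≤ dd) (hn : 0 ≤ n)
    (hstep : 2*k*hdv ≤ 2*k*dt + k*(2*dd-k+3) - 2*m)
    (hC : 2*C = dd*(dd+1))
    (hm : 2*C + 2*(dd*n) + 2 ≤ 2*m)
    (hc : 2*k*(dt + 1) ≤ 2*k*(hdv + n)) : False := by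
  nlinarith [sq_nonneg (dd - k), mul_nonneg hn (by linarith : (0:ℤ) ≤ dd - k)]

lemma aux_ineq1 (P s m dd tt r μ : ℤ) (hμ : μ = dd*tt + dd + 1 - r)
    (h2P : 2*P = 2*((dd - r)*(dd*tt)) + (dd - r)*((dd - r)+3))
    (hhi : 2*m ≤ r*(r+1)) (h2S : 2*s + 2*m = 2*(dd^2*tt) + dd*(dd+3)) :
    P + r*μ ≤ s := by subst hμ; nlinarith [h2P, hhi, h2S]

lemma aux_ineq2 (P s m dd tt μ : ℤ) (hμ : μ = dd*tt + dd)
    (h2P : 2*P = 2*((dd - 1)*(dd*tt)) + (dd - 1)*((dd - 1)+3))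
    (hm : 1 ≤ m) (h2S : 2*s + 2*m = 2*(dd^2*tt) + dd*(dd+3)) :
    s ≤ P + μ := by subst hμ; nlinarith [h2P, hm, h2S]

theorem statement8 (d t : ℕ) (hd : 1 ≤ d) :
    (∀ h : ℕ → ℕ,
      (∃ i0 : ℕ, 1 ≤ i0 ∧ i0 ≤ d ∧ (∀ i, 1 ≤ i → i ≤ i0 - 1 → h i = d * t + i + 1) ∧
        ∀ i, i0 ≤ i → i ≤ d - 1 → h (i + 1) ≤ h i) →
      (∑ i ∈ Finset.Icc 1 d, h i) ≤ d ^ 2 * t + d * (d + 3) / 2 →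
      h d ≤ mu2 d t (∑ i ∈ Finset.Icc 1 d, h i)) ∧
    ∀ s : ℕ, s ≤ d ^ 2 * t + d * (d + 3) / 2 →
      ∃ h : ℕ → ℕ,
        (∃ i0 : ℕ, 1 ≤ i0 ∧ i0 ≤ d ∧ (∀ i, 1 ≤ i → i ≤ i0 - 1 → h i = d * t + i + 1) ∧
          ∀ i, i0 ≤ i → i ≤ d - 1 → h (i + 1) ≤ h i) ∧
        (∑ i ∈ Finset.Icc 1 d, h i) = s ∧ h d = mu2 d t s := by
  constructor
  ·
    intro h ⟨i0, hi01, hi0d, hpre, hdec⟩ hsle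
    set s := ∑ i ∈ Finset.Icc 1 d, h i with hs
    set m := d ^ 2 * t + d * (d + 3) / 2 - s with hm
    clear_value s m
    have hIcc : Finset.Icc 1 d = Finset.Ioc 0 d := by ext i; simp; omega
    have hEven : 2 * (d*(d+3)/2) = d*(d+3) := aux_half_mul d
    have h2S : 2*s + 2*m = 2*(d^2*t) + d*(d+3) := by omega
    set j := i0 - 1 with hj
    set k := d - j with hk
    clear_value j k
    have hjk : j + k = d := by omega
    have hk1 : 1 ≤ k := by omega
    -- tail bound
    have tail : ∀ i, i0 ≤ i → i ≤ d → h d ≤ h i := by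
      have tl : ∀ n, n ≤ d - i0 → h d ≤ h (d - n) := by
        intro n
        induction n with
        | zero => simp
        | succ p ih =>
          intro hp
          have h1 : h (d - (p+1) + 1) ≤ h (d - (p+1)) := hdec _ (by omega) (by omega)
          have h2 : d - (p+1) + 1 = d - p := by omega
          rw [h2] at h1
          exact le_trans (ih (by omega)) h1
      intro i hi1 hi2
      have := tl (d - i) (by omega)
      have h3 : d - (d - i) = i := by omega
      rwa [h3] at this
    -- key inequality
    have key : 2*(j*(d*t)) + j*(j+3) + 2*(k * h d) ≤ 2*s := by
      have hsplit : (∑ i ∈ Finset.Ioc 0 j, h i) + ∑ i ∈ Finset.Ioc j d, h i = s := by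
        rw [hs, hIcc]; exact Finset.sum_Ioc_consecutive _ (by omega) (by omega)
      have h1 : ∑ i ∈ Finset.Ioc 0 j, h i = ∑ i ∈ Finset.Ioc 0 j, (d*t + i + 1) :=
        Finset.sum_congr rfl (fun i hi => by
          rw [Finset.mem_Ioc] at hi; exact hpre i (by omega) (by omega))
      have h2 : 2 * ∑ i ∈ Finset.Ioc 0 j, (d*t + i + 1) = 2*(j*(d*t)) + j*(j+3) :=
        aux_sum_arith (d*t) j
      have h3 : k * h d ≤ ∑ i ∈ Finset.Ioc j d, h i := by
        have h4 := Finset.card_nsmul_le_sum (Finset.Ioc j d) h (h d)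
          (fun i hi => by rw [Finset.mem_Ioc] at hi; exact tail i (by omega) hi.2)
        simpa [Nat.card_Ioc, ← hk] using h4
      omega
    -- cast to ℤ
    have keyz : 2*((j:ℤ)*(d*t)) + j*(j+3) + 2*(k * h d) ≤ 2*s := by exact_mod_cast key
    have h2Sz : 2*(s:ℤ) + 2*m = 2*(d^2*t) + d*(d+3) := by exact_mod_cast h2S
    have hjz : (j:ℤ) = d - k := by
      have : (j:ℤ) + k = d := by exact_mod_cast hjk
      linarith
    have hidz : 2*((j:ℤ)*(d*t)) + j*(j+3)
        = 2*((d:ℤ)^2*t) + d*(d+3) - (2*(k:ℤ)*(d*t) + k*(2*d-k+3)) := by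
      rw [hjz]; ring
    have step1 : 2*(k:ℤ)*(h d) ≤ 2*(k:ℤ)*(d*t) + k*(2*d-k+3) - 2*m := by
      have : 2*((k:ℤ) * h d) = 2*(k:ℤ)*(h d) := by ring
      linarith [keyz, h2Sz, hidz]
    by_cases hbr : m ≤ (d+1).choose 2
    · -- branch 1
      have hCe : 2*((d+1).choose 2) = d*(d+1) := aux_choose2 d
      have hrd : rOf m ≤ d := rOf_le m d (by omega)
      rw [mu2_eq1 d t s m hm hbr hrd]
      obtain ⟨hhi, hlo⟩ := rOf_spec m
      set r := rOf m with hr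
      clear_value r
      by_contra hc
      push_neg at hc
      have heq : d*t + d + 1 - r + r = d*t + d + 1 :=
        Nat.sub_add_cancel (by omega : r ≤ d*t + d + 1)
      have hc' : d*t + d + 2 ≤ h d + r := by omega
      have hcz : ((d:ℤ)*t + d + 2) ≤ (h d : ℤ) + r := by exact_mod_cast hc'
      have hkz : (1:ℤ) ≤ k := by exact_mod_cast hk1
      have hmul : 2*(k:ℤ)*((d:ℤ)*t + d + 2) ≤ 2*(k:ℤ)*((h d : ℤ) + r) := by
        apply mul_le_mul_of_nonneg_left hcz (by linarith)
      have hmz : (0:ℤ) ≤ m := by positivity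
      have hloz : (r:ℤ) = 0 ∨ (r:ℤ)*((r:ℤ)-1) < 2*(m:ℤ) := by
        rcases Nat.eq_zero_or_pos r with hh | hr1
        · left; exact_mod_cast hh
        · right
          have h0 : r*(r-1) < 2*m := by
            rcases hlo with h0 | h0
            · omega
            · exact h0
          have h1 : (r:ℤ)*(((r:ℕ) - 1 : ℕ) : ℤ) < 2*(m:ℤ) := by exact_mod_cast h0
          have h2 : (((r:ℕ) - 1 : ℕ) : ℤ) = (r:ℤ) - 1 := by
            push_cast [Nat.cast_sub hr1]; ring
          rwa [h2] at h1
      exact contra1 ((d:ℤ)*t) d (h d) k r m hkz hmz step1 hmul hloz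
    · -- branch 2
      rw [mu2_eq2 d t s m hm hbr]
      set C := (d+1).choose 2 with hC
      have hCe : 2*C = d*(d+1) := aux_choose2 d
      set n := (m - C - 1)/d with hn
      clear_value C n
      have hdm : d * n + (m - C - 1) % d = m - C - 1 := by
        rw [hn]; exact Nat.div_add_mod _ _
      have hmod : (m - C - 1) % d < d := Nat.mod_lt _ (by omega)
      have hdn : d*n + C + 1 ≤ m ∧ m ≤ C + (d*n + d) := by
        constructor <;> omega
      rcases Nat.eq_zero_or_pos (h d) with h0 | h0
      · rw [h0]; exact Nat.zero_le _
      by_contra hc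
      push_neg at hc
      have hc' : d*t + 1 ≤ h d + n := by
        rcases le_or_gt n (d*t) with hcase | hcase
        · have heq : d*t - n + n = d*t := Nat.sub_add_cancel hcase
          omega
        · omega
      have hcz : ((d:ℤ)*t + 1) ≤ (h d : ℤ) + n := by exact_mod_cast hc'
      have hkz : (1:ℤ) ≤ k := by exact_mod_cast hk1
      have hkd : (k:ℤ) ≤ d := by exact_mod_cast (show k ≤ d by omega)
      have hnz : (0:ℤ) ≤ n := by positivity
      have hmz : 2*(C:ℤ) + 2*((d:ℤ)*n) + 2 ≤ 2*(m:ℤ) := by exact_mod_cast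
        (show 2*C + 2*(d*n) + 2 ≤ 2*m by omega)
      have hCz : 2*(C:ℤ) = d*(d+1) := by exact_mod_cast hCe
      have hmul : 2*(k:ℤ)*((d:ℤ)*t + 1) ≤ 2*(k:ℤ)*((h d : ℤ) + n) := by
        apply mul_le_mul_of_nonneg_left hcz (by linarith)
      exact contra2 ((d:ℤ)*t) d (h d) k n m C hkz hkd hnz step1 hCz hmz hmul
  ·
    intro s hsle
    have hIcc : Finset.Icc 1 d = Finset.Ioc 0 d := by ext i; simp; omega
    set m := d ^ 2 * t + d * (d + 3) / 2 - s with hm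
    have hEven : 2 * (d*(d+3)/2) = d*(d+3) := aux_half_mul d
    have hCe : 2*((d+1).choose 2) = d*(d+1) := aux_choose2 d
    have h2S : 2*s + 2*m = 2*(d^2*t) + d*(d+3) := by omega
    have hdd3 : d*(d+3) = d*(d+1) + 2*d := by ring
    have hS2 : 2*(d^2*t) = 2*(d*(d*t)) := by ring
    clear_value m
    have h2Sz : 2*(s:ℤ) + 2*m = 2*((d:ℤ)^2*t) + d*(d+3) := by exact_mod_cast h2S
    by_cases hbr : m ≤ (d+1).choose 2
    · -- branch 1
      obtain ⟨hhi, hlo⟩ := rOf_spec m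
      have hrd : rOf m ≤ d := rOf_le m d (by omega)
      have hmu : mu2 d t s = d*t + d + 1 - rOf m := mu2_eq1 d t s m hm hbr hrd
      set r := rOf m with hr
      clear_value r
      have hhiz : 2*(m:ℤ) ≤ (r:ℤ)*((r:ℤ)+1) := by exact_mod_cast hhi
      rcases Nat.eq_zero_or_pos r with hr0 | hr1
      · -- r = 0, hence m = 0 and s is maximal
        have hm0 : m = 0 := by rw [hr0] at hhi; omega
        refine ⟨fun i => d*t + i + 1, ⟨d, hd, le_refl d, fun i _ _ => rfl,
          fun i h1 h2 => by omega⟩, ?_, ?_⟩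
        · show (∑ i ∈ Finset.Icc 1 d, (d*t + i + 1)) = s
          rw [hIcc]
          have hsum := aux_sum_arith (d*t) d
          omega
        · show d*t + d + 1 = mu2 d t s
          rw [hmu, hr0]
          omega
      · -- r ≥ 1
        set w := d - r with hw
        have hwr : w + r = d := by omega
        set μ := d*t + d + 1 - r with hμ
        have hμr : μ + r = d*t + d + 1 := by
          rw [hμ]; exact Nat.sub_add_cancel (by omega : r ≤ d*t + d + 1)
        clear_value w μ
        have hμz : (μ:ℤ) = (d:ℤ)*t + d + 1 - r := by
          have h0 : (μ:ℤ) + r = (d:ℤ)*t + d + 1 := by exact_mod_cast hμr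
          linarith
        have hwz : (w:ℤ) = (d:ℤ) - r := by
          have h0 : (w:ℤ) + r = (d:ℤ) := by exact_mod_cast hwr
          linarith
        set P := ∑ i ∈ Finset.Ioc 0 w, (d*t + i + 1) with hP
        have h2P : 2*P = 2*(w*(d*t)) + w*(w+3) := aux_sum_arith (d*t) w
        have h2Pz : 2*(P:ℤ) = 2*((w:ℤ)*((d:ℤ)*t)) + (w:ℤ)*((w:ℤ)+3) := by exact_mod_cast h2P
        rw [hwz] at h2Pz
        clear_value P
        have hPle : P + r*μ ≤ s := by
          have hz : (P:ℤ) + (r:ℤ)*(μ:ℤ) ≤ (s:ℤ) :=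
            aux_ineq1 (P:ℤ) s m d t r μ hμz h2Pz hhiz h2Sz
          exact_mod_cast hz
        have hr1μ : (r-1)*μ + μ = r*μ := by
          obtain ⟨e, he⟩ : ∃ e, r = e + 1 := ⟨r - 1, by omega⟩
          subst he; simp only [Nat.add_sub_cancel]; ring
        refine ⟨fun i => if i ≤ w then d*t + i + 1 else if i = w + 1 then s - P - (r-1)*μ else μ,
          ⟨w+1, by omega, by omega, ?_, ?_⟩, ?_, ?_⟩
        · intro i h1 h2
          simp only []
          rw [if_pos (by omega : i ≤ w)]
        · intro i h1 h2
          simp only []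
          split_ifs <;> omega
        · rw [hIcc, ← Finset.sum_Ioc_consecutive _ (Nat.zero_le w) (by omega : w ≤ d),
            ← Finset.sum_Ioc_consecutive _ (by omega : w ≤ w+1) (by omega : w+1 ≤ d)]
          have hA : (∑ i ∈ Finset.Ioc 0 w,
              (if i ≤ w then d*t + i + 1 else if i = w + 1 then s - P - (r-1)*μ else μ)) = P := by
            rw [hP]
            refine Finset.sum_congr rfl (fun i hi => ?_)
            rw [Finset.mem_Ioc] at hi
            rw [if_pos hi.2]
          have hsing : Finset.Ioc w (w+1) = {w+1} := by ext x; simp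
          have hB : (∑ i ∈ Finset.Ioc w (w+1),
              (if i ≤ w then d*t + i + 1 else if i = w + 1 then s - P - (r-1)*μ else μ))
              = s - P - (r-1)*μ := by
            rw [hsing, Finset.sum_singleton, if_neg (by omega), if_pos rfl]
          have hC2 : (∑ i ∈ Finset.Ioc (w+1) d,
              (if i ≤ w then d*t + i + 1 else if i = w + 1 then s - P - (r-1)*μ else μ))
              = (d - (w+1)) * μ := by
            have hconst : ∀ i ∈ Finset.Ioc (w+1) d,
                (if i ≤ w then d*t + i + 1 else if i = w + 1 then s - P - (r-1)*μ else μ) = μ :=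
              fun i hi => by
                rw [Finset.mem_Ioc] at hi
                rw [if_neg (by omega), if_neg (by omega)]
            rw [Finset.sum_congr rfl hconst, Finset.sum_const, Nat.card_Ioc, smul_eq_mul]
          rw [hA, hB, hC2]
          have hwd : d - (w+1) = r - 1 := by omega
          rw [hwd]
          omega
        · rw [hmu]
          rcases Nat.lt_or_ge r 2 with hre | hre
          · -- r = 1
            have hre1 : r = 1 := by omega
            have hm1 : 1 ≤ m := by
              rcases hlo with h0 | h0
              · omega
              · omega
            have hrez : (r:ℤ) = 1 := by exact_mod_cast hre1
            rw [hrez] at h2Pz hμz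
            have hμz' : (μ:ℤ) = (d:ℤ)*t + d := by linear_combination hμz
            have hm1z : (1:ℤ) ≤ m := by exact_mod_cast hm1
            have hsub : s ≤ P + μ := by
              have hz : (s:ℤ) ≤ (P:ℤ) + μ :=
                aux_ineq2 (P:ℤ) s m d t μ hμz' h2Pz hm1z h2Sz
              exact_mod_cast hz
            simp only []
            rw [if_neg (by omega), if_pos (by omega : d = w + 1)]
            have hrm : r * μ = μ := by rw [hre1]; ring
            omega
          · -- r ≥ 2
            simp only []
            rw [if_neg (by omega), if_neg (by omega)]
    · -- branch 2
      have hmu : mu2 d t s = d*t - (m - (d+1).choose 2 - 1)/d := mu2_eq2 d t s m hm hbr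
      set C := (d+1).choose 2 with hC
      set n := (m - C - 1)/d with hn
      clear_value C n
      have hdm : d*n + (m - C - 1) % d = m - C - 1 := by
        rw [hn]; exact Nat.div_add_mod _ _
      have hmod : (m - C - 1) % d < d := Nat.mod_lt _ (by omega)
      have hdn : d*n + C + 1 ≤ m ∧ m ≤ C + (d*n + d) := by constructor <;> omega
      have hnle : n ≤ d*t := by
        have h1 : d*n < d*(d*t+1) := by
          have hexp : d*(d*t+1) = d*(d*t) + d := by ring
          omega
        exact Nat.lt_succ_iff.mp (Nat.lt_of_mul_lt_mul_left h1)
      set μ := d*t - n with hμ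
      have hμn : μ + n = d*t := by rw [hμ]; exact Nat.sub_add_cancel hnle
      clear_value μ
      have hmulμ : d*μ + d*n = d*(d*t) := by rw [← hμn]; ring
      have hdμ : d*μ ≤ s := by omega
      have hd1μ : (d-1)*μ + μ = d*μ := by
        obtain ⟨e, he⟩ : ∃ e, d = e + 1 := ⟨d - 1, by omega⟩
        subst he; simp only [Nat.add_sub_cancel]; ring
      refine ⟨fun i => if i = 1 then s - (d-1)*μ else μ, ⟨1, le_refl 1, hd,
        fun i h1 h2 => by omega, ?_⟩, ?_, ?_⟩
      · intro i h1 h2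
        simp only []
        split_ifs <;> omega
      · rw [hIcc, ← Finset.sum_Ioc_consecutive _ (Nat.zero_le 1) (by omega : 1 ≤ d)]
        have hsing : Finset.Ioc 0 1 = {1} := by ext x; simp
        have hA : (∑ i ∈ Finset.Ioc 0 1, (if i = 1 then s - (d-1)*μ else μ)) = s - (d-1)*μ := by
          rw [hsing, Finset.sum_singleton, if_pos rfl]
        have hB : (∑ i ∈ Finset.Ioc 1 d, (if i = 1 then s - (d-1)*μ else μ)) = (d-1)*μ := by
          have hconst : ∀ i ∈ Finset.Ioc 1 d, (if i = 1 then s - (d-1)*μ else μ) = μ :=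
            fun i hi => by
              rw [Finset.mem_Ioc] at hi
              rw [if_neg (by omega)]
          rw [Finset.sum_congr rfl hconst, Finset.sum_const, Nat.card_Ioc, smul_eq_mul]
        rw [hA, hB]
        omega
      · rw [hmu]
        rcases Nat.lt_or_ge d 2 with hd2 | hd2
        · -- d = 1
          have hd1 : d = 1 := by omega
          subst hd1
          show (if (1:ℕ) = 1 then s - (1-1)*μ else μ) = μ
          rw [if_pos rfl]
          omega
        · simp only []
          rw [if_neg (by omega)]

end VeroneseCI
end
end
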